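/- If Γ is a nonempty compact subset of ℂ and z is an interior point of Γ, then there exist distinct points z₁, z₂ ∈ ∂Γ with z₁ + z₂ = 2z. -/

import Mathlib

open Metric Filter

noncomputable section
namespace IPmid

/-- The closed grid cell of size `ε` centered at `z + ε*(i + j*I)`. -/
def gcell (z : ℂ) (ε : ℝ) (i j : ℤ) : Set ℂ :=
  {w | |w.re - (z.re + ε * i)| ≤ ε / 2 ∧ |w.im - (z.im + ε * j)| ≤ ε / 2}

/-- The cell `(i,j)` meets `Γ`. -/
def pp (Γ : Set ℂ) (z : ℂ) (ε : ℝ) (i j : ℤ) : Prop := (Γ ∩ gcell z ε i j).Nonempty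

/-- Union of all cells meeting `Γ`. -/
def gP (Γ : Set ℂ) (z : ℂ) (ε : ℝ) : Set ℂ :=
  {w | ∃ i j : ℤ, pp Γ z ε i j ∧ w ∈ gcell z ε i j}

variable {Γ : Set ℂ} {z : ℂ} {ε : ℝ}

lemma gcell_neg {x : ℂ} {i j : ℤ} (h : x ∈ gcell z ε i j) :
    2*z - x ∈ gcell z ε (-i) (-j) := by
  obtain ⟨h1, h2⟩ := h
  constructor
  · have he : (2*z - x).re - (z.re + ε * ((-i : ℤ) : ℝ)) = -(x.re - (z.re + ε * i)) := by
      simp [Complex.sub_re, Complex.mul_re]; ring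
    show |(2*z - x).re - (z.re + ε * ((-i : ℤ) : ℝ))| ≤ ε / 2
    rw [he, abs_neg]; exact h1
  · have he : (2*z - x).im - (z.im + ε * ((-j : ℤ) : ℝ)) = -(x.im - (z.im + ε * j)) := by
      simp [Complex.sub_im, Complex.mul_im]; ring
    show |(2*z - x).im - (z.im + ε * ((-j : ℤ) : ℝ))| ≤ ε / 2
    rw [he, abs_neg]; exact h2

lemma int_eq_of_dist (hε : 0 < ε) {a : ℝ} {i i' : ℤ} (c : ℝ)
    (h1 : |a - (c + ε * i)| < ε / 2) (h2 : |a - (c + ε * i')| ≤ ε / 2) : i' = i := by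
  have hd : |(c + ε * i) - (c + ε * i')| < ε := by
    calc |(c + ε * i) - (c + ε * i')|
        ≤ |a - (c + ε * i)| + |a - (c + ε * i')| := by
          have he : (c + ε * i) - (c + ε * i') = -((a - (c + ε * i)) - (a - (c + ε * i'))) := by ring
          rw [he, abs_neg]; exact abs_sub _ _
      _ < ε := by linarith
  have hd2 : ε * |(i : ℝ) - i'| < ε := by
    have he : (c + ε * i) - (c + ε * i') = ε * ((i : ℝ) - i') := by ring
    rwa [he, abs_mul, abs_of_pos hε] at hd
  have : |(i : ℝ) - i'| < 1 := by
    by_contra hcon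
    push_neg at hcon
    nlinarith
  have h5 : |((i - i' : ℤ) : ℝ)| < 1 := by push_cast; exact this
  have h6 : |i - i'| < 1 := by exact_mod_cast h5
  have := abs_lt.mp h6
  omega

lemma cell_unique (hε : 0 < ε) {w : ℂ} {i j i' j' : ℤ}
    (hs1 : |w.re - (z.re + ε * i)| < ε / 2) (hs2 : |w.im - (z.im + ε * j)| < ε / 2)
    (h : w ∈ gcell z ε i' j') : i' = i ∧ j' = j :=
  ⟨int_eq_of_dist hε z.re hs1 h.1, int_eq_of_dist hε z.im hs2 h.2⟩

/-- Every point of a closed cell is in the closure of the open cell. -/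
lemma mem_closure_strict (hε : 0 < ε) {x : ℂ} {i j : ℤ} (hx : x ∈ gcell z ε i j) :
    ∀ δ > 0, ∃ w : ℂ, (|w.re - (z.re + ε * i)| < ε / 2 ∧ |w.im - (z.im + ε * j)| < ε / 2)
      ∧ dist x w < δ := by
  intro δ hδ
  set c : ℂ := ⟨z.re + ε * i, z.im + ε * j⟩ with hc
  set t : ℝ := min (1/2) (δ / (2 * ε)) with ht
  have ht0 : 0 < t := lt_min (by norm_num) (by positivity)
  have ht1 : t < 1 := lt_of_le_of_lt (min_le_left _ _) (by norm_num)
  refine ⟨c + (1 - t) • (x - c), ⟨?_, ?_⟩, ?_⟩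
  · have he : (c + (1 - t) • (x - c)).re - (z.re + ε * i) = (1 - t) * (x.re - (z.re + ε * i)) := by
      simp [hc, Complex.add_re, Complex.smul_re, Complex.sub_re]
    rw [he, abs_mul, abs_of_pos (by linarith : (0:ℝ) < 1 - t)]
    have h1 := hx.1
    nlinarith [abs_nonneg (x.re - (z.re + ε * i))]
  · have he : (c + (1 - t) • (x - c)).im - (z.im + ε * j) = (1 - t) * (x.im - (z.im + ε * j)) := by
      simp [hc, Complex.add_im, Complex.smul_im, Complex.sub_im]
    rw [he, abs_mul, abs_of_pos (by linarith : (0:ℝ) < 1 - t)]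
    have h2 := hx.2
    nlinarith [abs_nonneg (x.im - (z.im + ε * j))]
  · have he : x - (c + (1 - t) • (x - c)) = t • (x - c) := by
      simp only [smul_sub, Complex.real_smul]; push_cast; ring
    rw [Complex.dist_eq, he]
    have hb : ‖x - c‖ ≤ ε := by
      have := Complex.norm_le_abs_re_add_abs_im (x - c)
      have h1 : |(x - c).re| ≤ ε / 2 := by
        have : (x - c).re = x.re - (z.re + ε * i) := by simp [hc, Complex.sub_re]
        rw [this]; exact hx.1
      have h2 : |(x - c).im| ≤ ε / 2 := by
        have : (x - c).im = x.im - (z.im + ε * j) := by simp [hc, Complex.sub_im]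
        rw [this]; exact hx.2
      linarith
    rw [Complex.real_smul, norm_mul, Complex.norm_real, Real.norm_eq_abs, abs_of_pos ht0]
    have : t * ‖x - c‖ ≤ t * ε := by nlinarith
    have h2 : t * ε ≤ δ / 2 := by
      have := min_le_right (1/2 : ℝ) (δ / (2 * ε))
      calc t * ε ≤ (δ / (2 * ε)) * ε := by nlinarith
        _ = δ / 2 := by field_simp
    linarith

lemma mem_frontier_gP (hε : 0 < ε) {x : ℂ} {a1 a2 b1 b2 : ℤ}
    (hxa : x ∈ gcell z ε a1 a2) (hpa : pp Γ z ε a1 a2)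
    (hxb : x ∈ gcell z ε b1 b2) (hpb : ¬ pp Γ z ε b1 b2) :
    x ∈ frontier (gP Γ z ε) := by
  rw [frontier_eq_closure_inter_closure]
  refine ⟨subset_closure ⟨a1, a2, hpa, hxa⟩, ?_⟩
  rw [Metric.mem_closure_iff]
  intro δ hδ
  obtain ⟨w, hws, hwd⟩ := mem_closure_strict hε hxb δ hδ
  refine ⟨w, ?_, hwd⟩
  intro hw
  obtain ⟨i, j, hpij, hwc⟩ := hw
  obtain ⟨e1, e2⟩ := cell_unique hε hws.1 hws.2 hwc
  exact hpb (e1 ▸ e2 ▸ hpij)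

/-- `qq i j` : both the cell and its reflection through `z` meet `Γ`. -/
def qq (Γ : Set ℂ) (z : ℂ) (ε : ℝ) (i j : ℤ) : Prop :=
  pp Γ z ε i j ∧ pp Γ z ε (-i) (-j)

lemma clash (hε : 0 < ε)
    (hA : ∀ x : ℂ, x ∈ frontier (gP Γ z ε) → 2*z - x ∉ frontier (gP Γ z ε))
    {x : ℂ} {a1 a2 b1 b2 c1 c2 d1 d2 : ℤ}
    (hxa : x ∈ gcell z ε a1 a2) (hpa : pp Γ z ε a1 a2)
    (hxb : x ∈ gcell z ε b1 b2) (hpb : ¬ pp Γ z ε b1 b2)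
    (hxc : x ∈ gcell z ε c1 c2) (hpc : pp Γ z ε (-c1) (-c2))
    (hxd : x ∈ gcell z ε d1 d2) (hpd : ¬ pp Γ z ε (-d1) (-d2)) : False :=
  hA x (mem_frontier_gP hε hxa hpa hxb hpb)
    (mem_frontier_gP hε (gcell_neg hxc) hpc (gcell_neg hxd) hpd)

/-- midpoint of the vertical edge between cells `(i,j)` and `(i+1,j)`. -/
def mV (z : ℂ) (ε : ℝ) (i j : ℤ) : ℂ := ⟨z.re + ε*i + ε/2, z.im + ε*j⟩
/-- midpoint of the horizontal edge between cells `(i,j)` and `(i,j+1)`. -/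
def mH (z : ℂ) (ε : ℝ) (i j : ℤ) : ℂ := ⟨z.re + ε*i, z.im + ε*j + ε/2⟩
/-- the grid vertex shared by cells `(i,j), (i+1,j), (i,j+1), (i+1,j+1)`. -/
def vx (z : ℂ) (ε : ℝ) (i j : ℤ) : ℂ := ⟨z.re + ε*i + ε/2, z.im + ε*j + ε/2⟩

lemma mem_gcell_of_eq (hε : 0 < ε) {w : ℂ} {i j : ℤ}
    (h1 : w.re - (z.re + ε*i) = ε/2 ∨ w.re - (z.re + ε*i) = -(ε/2) ∨ w.re - (z.re + ε*i) = 0)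
    (h2 : w.im - (z.im + ε*j) = ε/2 ∨ w.im - (z.im + ε*j) = -(ε/2) ∨ w.im - (z.im + ε*j) = 0) :
    w ∈ gcell z ε i j := by
  constructor
  · rcases h1 with h | h | h <;> rw [h, abs_le] <;> constructor <;> linarith
  · rcases h2 with h | h | h <;> rw [h, abs_le] <;> constructor <;> linarith

lemma mV_mem₁ (hε : 0 < ε) (i j : ℤ) : mV z ε i j ∈ gcell z ε i j :=
  mem_gcell_of_eq hε (by left; simp [mV]) (by right; right; simp [mV])
lemma mV_mem₂ (hε : 0 < ε) (i j : ℤ) : mV z ε i j ∈ gcell z ε (i+1) j :=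
  mem_gcell_of_eq hε (by right; left; simp [mV]; push_cast; ring) (by right; right; simp [mV])
lemma mH_mem₁ (hε : 0 < ε) (i j : ℤ) : mH z ε i j ∈ gcell z ε i j :=
  mem_gcell_of_eq hε (by right; right; simp [mH]) (by left; simp [mH])
lemma mH_mem₂ (hε : 0 < ε) (i j : ℤ) : mH z ε i j ∈ gcell z ε i (j+1) :=
  mem_gcell_of_eq hε (by right; right; simp [mH]) (by right; left; simp [mH]; push_cast; ring)
lemma vx_mem₁ (hε : 0 < ε) (i j : ℤ) : vx z ε i j ∈ gcell z ε i j :=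
  mem_gcell_of_eq hε (by left; simp [vx]) (by left; simp [vx])
lemma vx_mem₂ (hε : 0 < ε) (i j : ℤ) : vx z ε i j ∈ gcell z ε (i+1) j :=
  mem_gcell_of_eq hε (by right; left; simp [vx]; push_cast; ring) (by left; simp [vx])
lemma vx_mem₃ (hε : 0 < ε) (i j : ℤ) : vx z ε i j ∈ gcell z ε i (j+1) :=
  mem_gcell_of_eq hε (by left; simp [vx]) (by right; left; simp [vx]; push_cast; ring)
lemma vx_mem₄ (hε : 0 < ε) (i j : ℤ) : vx z ε i j ∈ gcell z ε (i+1) (j+1) :=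
  mem_gcell_of_eq hε (by right; left; simp [vx]; push_cast; ring)
    (by right; left; simp [vx]; push_cast; ring)

/-- vertical boundary edge between cells `(i,j)` and `(i+1,j)` whose outer cell misses `Γ` ("red"). -/
def rv (Γ : Set ℂ) (z : ℂ) (ε : ℝ) (i j : ℤ) : Prop :=
  (qq Γ z ε i j ∧ ¬ qq Γ z ε (i+1) j ∧ ¬ pp Γ z ε (i+1) j) ∨
  (qq Γ z ε (i+1) j ∧ ¬ qq Γ z ε i j ∧ ¬ pp Γ z ε i j)

/-- vertical boundary edge whose reflected outer cell misses `Γ` ("blue"). -/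
def bv (Γ : Set ℂ) (z : ℂ) (ε : ℝ) (i j : ℤ) : Prop :=
  (qq Γ z ε i j ∧ ¬ qq Γ z ε (i+1) j ∧ ¬ pp Γ z ε (-(i+1)) (-j)) ∨
  (qq Γ z ε (i+1) j ∧ ¬ qq Γ z ε i j ∧ ¬ pp Γ z ε (-i) (-j))

def rh (Γ : Set ℂ) (z : ℂ) (ε : ℝ) (i j : ℤ) : Prop :=
  (qq Γ z ε i j ∧ ¬ qq Γ z ε i (j+1) ∧ ¬ pp Γ z ε i (j+1)) ∨
  (qq Γ z ε i (j+1) ∧ ¬ qq Γ z ε i j ∧ ¬ pp Γ z ε i j)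

def bh (Γ : Set ℂ) (z : ℂ) (ε : ℝ) (i j : ℤ) : Prop :=
  (qq Γ z ε i j ∧ ¬ qq Γ z ε i (j+1) ∧ ¬ pp Γ z ε (-i) (-(j+1))) ∨
  (qq Γ z ε i (j+1) ∧ ¬ qq Γ z ε i j ∧ ¬ pp Γ z ε (-i) (-j))

open Classical in
noncomputable def qb (Γ : Set ℂ) (z : ℂ) (ε : ℝ) (i j : ℤ) : ZMod 2 := if qq Γ z ε i j then 1 else 0
open Classical in
noncomputable def iv (Γ : Set ℂ) (z : ℂ) (ε : ℝ) (i j : ℤ) : ZMod 2 := if rv Γ z ε i j then 1 else 0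
open Classical in
noncomputable def ibv (Γ : Set ℂ) (z : ℂ) (ε : ℝ) (i j : ℤ) : ZMod 2 := if bv Γ z ε i j then 1 else 0
open Classical in
noncomputable def ih (Γ : Set ℂ) (z : ℂ) (ε : ℝ) (i j : ℤ) : ZMod 2 := if rh Γ z ε i j then 1 else 0

lemma qq_symm (i j : ℤ) : qq Γ z ε (-i) (-j) ↔ qq Γ z ε i j := by
  simp only [qq, neg_neg]; tauto

lemma rv_or_bv {i j : ℤ} (h : ¬ (qq Γ z ε i j ↔ qq Γ z ε (i+1) j)) :
    rv Γ z ε i j ∨ bv Γ z ε i j := by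
  by_cases h1 : qq Γ z ε i j
  · have h2 : ¬ qq Γ z ε (i+1) j := fun hq => h ⟨fun _ => hq, fun _ => h1⟩
    have h3 : ¬ pp Γ z ε (i+1) j ∨ ¬ pp Γ z ε (-(i+1)) (-j) := by
      by_contra hc; push_neg at hc; exact h2 ⟨hc.1, hc.2⟩
    rcases h3 with h3 | h3
    · exact Or.inl (Or.inl ⟨h1, h2, h3⟩)
    · exact Or.inr (Or.inl ⟨h1, h2, h3⟩)
  · have h2 : qq Γ z ε (i+1) j := by
      by_contra h2; exact h ⟨fun hq => absurd hq h1, fun hq => absurd hq h2⟩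
    have h3 : ¬ pp Γ z ε i j ∨ ¬ pp Γ z ε (-i) (-j) := by
      by_contra hc; push_neg at hc; exact h1 ⟨hc.1, hc.2⟩
    rcases h3 with h3 | h3
    · exact Or.inl (Or.inr ⟨h2, h1, h3⟩)
    · exact Or.inr (Or.inr ⟨h2, h1, h3⟩)

lemma rh_or_bh {i j : ℤ} (h : ¬ (qq Γ z ε i j ↔ qq Γ z ε i (j+1))) :
    rh Γ z ε i j ∨ bh Γ z ε i j := by
  by_cases h1 : qq Γ z ε i j
  · have h2 : ¬ qq Γ z ε i (j+1) := fun hq => h ⟨fun _ => hq, fun _ => h1⟩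
    have h3 : ¬ pp Γ z ε i (j+1) ∨ ¬ pp Γ z ε (-i) (-(j+1)) := by
      by_contra hc; push_neg at hc; exact h2 ⟨hc.1, hc.2⟩
    rcases h3 with h3 | h3
    · exact Or.inl (Or.inl ⟨h1, h2, h3⟩)
    · exact Or.inr (Or.inl ⟨h1, h2, h3⟩)
  · have h2 : qq Γ z ε i (j+1) := by
      by_contra h2; exact h ⟨fun hq => absurd hq h1, fun hq => absurd hq h2⟩
    have h3 : ¬ pp Γ z ε i j ∨ ¬ pp Γ z ε (-i) (-j) := by
      by_contra hc; push_neg at hc; exact h1 ⟨hc.1, hc.2⟩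
    rcases h3 with h3 | h3
    · exact Or.inl (Or.inr ⟨h2, h1, h3⟩)
    · exact Or.inr (Or.inr ⟨h2, h1, h3⟩)

variable (hε : 0 < ε)
  (hA : ∀ x : ℂ, x ∈ frontier (gP Γ z ε) → 2*z - x ∉ frontier (gP Γ z ε))

include hε hA in
lemma not_rv_and_bv {i j : ℤ} : ¬ (rv Γ z ε i j ∧ bv Γ z ε i j) := by
  rintro ⟨hr, hb⟩
  rcases hr with ⟨h1, h2, h3⟩ | ⟨h1, h2, h3⟩ <;> rcases hb with ⟨g1, g2, g3⟩ | ⟨g1, g2, g3⟩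
  · exact clash hε hA (mV_mem₁ hε i j) h1.1 (mV_mem₂ hε i j) h3
      (mV_mem₁ hε i j) h1.2 (mV_mem₂ hε i j) g3
  · exact h2 g1
  · exact g2 h1
  · exact clash hε hA (mV_mem₂ hε i j) h1.1 (mV_mem₁ hε i j) h3
      (mV_mem₂ hε i j) h1.2 (mV_mem₁ hε i j) g3

include hε hA in
lemma not_rh_and_bh {i j : ℤ} : ¬ (rh Γ z ε i j ∧ bh Γ z ε i j) := by
  rintro ⟨hr, hb⟩
  rcases hr with ⟨h1, h2, h3⟩ | ⟨h1, h2, h3⟩ <;> rcases hb with ⟨g1, g2, g3⟩ | ⟨g1, g2, g3⟩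
  · exact clash hε hA (mH_mem₁ hε i j) h1.1 (mH_mem₂ hε i j) h3
      (mH_mem₁ hε i j) h1.2 (mH_mem₂ hε i j) g3
  · exact h2 g1
  · exact g2 h1
  · exact clash hε hA (mH_mem₂ hε i j) h1.1 (mH_mem₁ hε i j) h3
      (mH_mem₂ hε i j) h1.2 (mH_mem₁ hε i j) g3

include hε hA in
lemma vertex_clash (i j : ℤ)
    (hr : rv Γ z ε i j ∨ rv Γ z ε i (j+1) ∨ rh Γ z ε i j ∨ rh Γ z ε (i+1) j)
    (hb : bv Γ z ε i j ∨ bv Γ z ε i (j+1) ∨ bh Γ z ε i j ∨ bh Γ z ε (i+1) j) : False := by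
  have hred : ∃ a1 a2 b1 b2 : ℤ, vx z ε i j ∈ gcell z ε a1 a2 ∧ pp Γ z ε a1 a2 ∧
      vx z ε i j ∈ gcell z ε b1 b2 ∧ ¬ pp Γ z ε b1 b2 := by
    rcases hr with (⟨h1,h2,h3⟩|⟨h1,h2,h3⟩)|(⟨h1,h2,h3⟩|⟨h1,h2,h3⟩)|(⟨h1,h2,h3⟩|⟨h1,h2,h3⟩)|(⟨h1,h2,h3⟩|⟨h1,h2,h3⟩)
    · exact ⟨i, j, i+1, j, vx_mem₁ hε i j, h1.1, vx_mem₂ hε i j, h3⟩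
    · exact ⟨i+1, j, i, j, vx_mem₂ hε i j, h1.1, vx_mem₁ hε i j, h3⟩
    · exact ⟨i, j+1, i+1, j+1, vx_mem₃ hε i j, h1.1, vx_mem₄ hε i j, h3⟩
    · exact ⟨i+1, j+1, i, j+1, vx_mem₄ hε i j, h1.1, vx_mem₃ hε i j, h3⟩
    · exact ⟨i, j, i, j+1, vx_mem₁ hε i j, h1.1, vx_mem₃ hε i j, h3⟩
    · exact ⟨i, j+1, i, j, vx_mem₃ hε i j, h1.1, vx_mem₁ hε i j, h3⟩
    · exact ⟨i+1, j, i+1, j+1, vx_mem₂ hε i j, h1.1, vx_mem₄ hε i j, h3⟩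
    · exact ⟨i+1, j+1, i+1, j, vx_mem₄ hε i j, h1.1, vx_mem₂ hε i j, h3⟩
  have hblu : ∃ c1 c2 d1 d2 : ℤ, vx z ε i j ∈ gcell z ε c1 c2 ∧ pp Γ z ε (-c1) (-c2) ∧
      vx z ε i j ∈ gcell z ε d1 d2 ∧ ¬ pp Γ z ε (-d1) (-d2) := by
    rcases hb with (⟨h1,h2,h3⟩|⟨h1,h2,h3⟩)|(⟨h1,h2,h3⟩|⟨h1,h2,h3⟩)|(⟨h1,h2,h3⟩|⟨h1,h2,h3⟩)|(⟨h1,h2,h3⟩|⟨h1,h2,h3⟩)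
    · exact ⟨i, j, i+1, j, vx_mem₁ hε i j, h1.2, vx_mem₂ hε i j, h3⟩
    · exact ⟨i+1, j, i, j, vx_mem₂ hε i j, h1.2, vx_mem₁ hε i j, h3⟩
    · exact ⟨i, j+1, i+1, j+1, vx_mem₃ hε i j, h1.2, vx_mem₄ hε i j, h3⟩
    · exact ⟨i+1, j+1, i, j+1, vx_mem₄ hε i j, h1.2, vx_mem₃ hε i j, h3⟩
    · exact ⟨i, j, i, j+1, vx_mem₁ hε i j, h1.2, vx_mem₃ hε i j, h3⟩
    · exact ⟨i, j+1, i, j, vx_mem₃ hε i j, h1.2, vx_mem₁ hε i j, h3⟩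
    · exact ⟨i+1, j, i+1, j+1, vx_mem₂ hε i j, h1.2, vx_mem₄ hε i j, h3⟩
    · exact ⟨i+1, j+1, i+1, j, vx_mem₄ hε i j, h1.2, vx_mem₂ hε i j, h3⟩
  obtain ⟨a1, a2, b1, b2, hxa, hpa, hxb, hpb⟩ := hred
  obtain ⟨c1, c2, d1, d2, hxc, hpc, hxd, hpd⟩ := hblu
  exact clash hε hA hxa hpa hxb hpb hxc hpc hxd hpd

omit hε hA in
lemma iv_eq (i j : ℤ)
    (hb : ¬ bv Γ z ε i j) : iv Γ z ε i j = qb Γ z ε i j + qb Γ z ε (i+1) j := by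
  by_cases q1 : qq Γ z ε i j <;> by_cases q2 : qq Γ z ε (i+1) j
  · have hnr : ¬ rv Γ z ε i j := by
      rintro (⟨_, h, _⟩ | ⟨_, h, _⟩)
      exacts [h q2, h q1]
    simp only [iv, qb, if_pos q1, if_pos q2, if_neg hnr]; decide
  · have hr : rv Γ z ε i j := by
      rcases rv_or_bv (Γ := Γ) (z := z) (ε := ε) (fun hiff => q2 (hiff.mp q1)) with h | h
      exacts [h, absurd h hb]
    simp only [iv, qb, if_pos q1, if_neg q2, if_pos hr]; decide
  · have hr : rv Γ z ε i j := by
      rcases rv_or_bv (Γ := Γ) (z := z) (ε := ε) (fun hiff => q1 (hiff.mpr q2)) with h | h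
      exacts [h, absurd h hb]
    simp only [iv, qb, if_neg q1, if_pos q2, if_pos hr]; decide
  · have hnr : ¬ rv Γ z ε i j := by
      rintro (⟨h, _, _⟩ | ⟨h, _, _⟩)
      exacts [q1 h, q2 h]
    simp only [iv, qb, if_neg q1, if_neg q2, if_neg hnr]; decide

omit hε hA in
lemma ih_eq (i j : ℤ)
    (hb : ¬ bh Γ z ε i j) : ih Γ z ε i j = qb Γ z ε i j + qb Γ z ε i (j+1) := by
  by_cases q1 : qq Γ z ε i j <;> by_cases q2 : qq Γ z ε i (j+1)
  · have hnr : ¬ rh Γ z ε i j := by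
      rintro (⟨_, h, _⟩ | ⟨_, h, _⟩)
      exacts [h q2, h q1]
    simp only [ih, qb, if_pos q1, if_pos q2, if_neg hnr]; decide
  · have hr : rh Γ z ε i j := by
      rcases rh_or_bh (Γ := Γ) (z := z) (ε := ε) (fun hiff => q2 (hiff.mp q1)) with h | h
      exacts [h, absurd h hb]
    simp only [ih, qb, if_pos q1, if_neg q2, if_pos hr]; decide
  · have hr : rh Γ z ε i j := by
      rcases rh_or_bh (Γ := Γ) (z := z) (ε := ε) (fun hiff => q1 (hiff.mpr q2)) with h | h
      exacts [h, absurd h hb]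
    simp only [ih, qb, if_neg q1, if_pos q2, if_pos hr]; decide
  · have hnr : ¬ rh Γ z ε i j := by
      rintro (⟨h, _, _⟩ | ⟨h, _, _⟩)
      exacts [q1 h, q2 h]
    simp only [ih, qb, if_neg q1, if_neg q2, if_neg hnr]; decide

include hε hA in
lemma vertex_even (i j : ℤ) :
    iv Γ z ε i j + iv Γ z ε i (j+1) + ih Γ z ε i j + ih Γ z ε (i+1) j = 0 := by
  by_cases hblue : bv Γ z ε i j ∨ bv Γ z ε i (j+1) ∨ bh Γ z ε i j ∨ bh Γ z ε (i+1) j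
  · have h1 : ¬ rv Γ z ε i j := fun h => vertex_clash hε hA i j (Or.inl h) hblue
    have h2 : ¬ rv Γ z ε i (j+1) := fun h => vertex_clash hε hA i j (Or.inr (Or.inl h)) hblue
    have h3 : ¬ rh Γ z ε i j := fun h => vertex_clash hε hA i j (Or.inr (Or.inr (Or.inl h))) hblue
    have h4 : ¬ rh Γ z ε (i+1) j :=
      fun h => vertex_clash hε hA i j (Or.inr (Or.inr (Or.inr h))) hblue
    simp [iv, ih, h1, h2, h3, h4]
  · push_neg at hblue
    obtain ⟨hb1, hb2, hb3, hb4⟩ := hblue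
    rw [iv_eq i j hb1, iv_eq i (j+1) hb2, ih_eq i j hb3, ih_eq (i+1) j hb4]
    have key : ∀ a b c d : ZMod 2, (a + b) + (c + d) + (a + c) + (b + d) = 0 := by decide
    exact key _ _ _ _

lemma rv_iff_bv_neg (i : ℤ) : rv Γ z ε i 0 ↔ bv Γ z ε (-i-1) 0 := by
  have e1 : (-i-1) + 1 = -i := by ring
  have q1 : qq Γ z ε (-i-1) 0 ↔ qq Γ z ε (i+1) 0 := by
    have : qq Γ z ε (-(i+1)) (-0) ↔ qq Γ z ε (i+1) 0 := qq_symm (i+1) 0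
    simpa [neg_add, sub_eq_add_neg, add_comm] using this
  have q2 : qq Γ z ε (-i) 0 ↔ qq Γ z ε i 0 := by
    have := qq_symm (Γ := Γ) (z := z) (ε := ε) i 0
    simpa using this
  constructor
  · rintro (⟨h1, h2, h3⟩ | ⟨h1, h2, h3⟩)
    · -- rv first ↦ bv second at -i-1 : ⟨qq (-i-1+1) 0, ¬ qq (-i-1) 0, ¬ pp (-(-i-1)) (-0)⟩
      refine Or.inr ⟨?_, ?_, ?_⟩
      · rw [e1]; exact q2.mpr h1
      · exact fun h => h2 (q1.mp h)
      · have e2 : -(-i-1) = i+1 := by ring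
        rw [e2]; simpa using h3
    · refine Or.inl ⟨?_, ?_, ?_⟩
      · exact q1.mpr h1
      · rw [e1]; exact fun h => h2 (q2.mp h)
      · rw [e1]; simpa using h3
  · rintro (⟨h1, h2, h3⟩ | ⟨h1, h2, h3⟩)
    · -- bv first at -i-1: ⟨qq (-i-1) 0, ¬ qq (-i) 0, ¬ pp (-(-i-1+1)) 0⟩ ↦ rv second
      rw [e1] at h2 h3
      refine Or.inr ⟨q1.mp h1, fun h => h2 (q2.mpr h), ?_⟩
      have e2 : -(-i) = i := by ring
      rw [e2] at h3; exact h3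
    · rw [e1] at h1
      refine Or.inl ⟨q2.mp h1, fun h => h2 (q1.mpr h), ?_⟩
      have e2 : -(-i-1) = i+1 := by ring
      rw [e2] at h3; simpa using h3

include hε hA in
lemma iv_add_ibv (i : ℤ) :
    iv Γ z ε i 0 + ibv Γ z ε i 0 = qb Γ z ε i 0 + qb Γ z ε (i+1) 0 := by
  by_cases hd : qq Γ z ε i 0 ↔ qq Γ z ε (i+1) 0
  · have hnr : ¬ rv Γ z ε i 0 := by
      rintro (⟨h1, h2, _⟩ | ⟨h1, h2, _⟩)
      exacts [h2 (hd.mp h1), h2 (hd.mpr h1)]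
    have hnb : ¬ bv Γ z ε i 0 := by
      rintro (⟨h1, h2, _⟩ | ⟨h1, h2, _⟩)
      exacts [h2 (hd.mp h1), h2 (hd.mpr h1)]
    by_cases q1 : qq Γ z ε i 0
    · have q2 := hd.mp q1
      simp only [iv, ibv, qb, if_neg hnr, if_neg hnb, if_pos q1, if_pos q2]; decide
    · have q2 : ¬ qq Γ z ε (i+1) 0 := fun h => q1 (hd.mpr h)
      simp only [iv, ibv, qb, if_neg hnr, if_neg hnb, if_neg q1, if_neg q2]
  · have hq : qb Γ z ε i 0 + qb Γ z ε (i+1) 0 = 1 := by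
      by_cases q1 : qq Γ z ε i 0
      · have q2 : ¬ qq Γ z ε (i+1) 0 := fun h => hd ⟨fun _ => h, fun _ => q1⟩
        simp only [qb, if_pos q1, if_neg q2]; decide
      · have q2 : qq Γ z ε (i+1) 0 := by
          by_contra h; exact hd ⟨fun h' => absurd h' q1, fun h' => absurd h' h⟩
        simp only [qb, if_neg q1, if_pos q2]; decide
    rw [hq]
    rcases rv_or_bv (Γ := Γ) (z := z) (ε := ε) hd with hr | hb
    · have hnb : ¬ bv Γ z ε i 0 := fun hb => not_rv_and_bv hε hA ⟨hr, hb⟩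
      simp only [iv, ibv, if_pos hr, if_neg hnb]; decide
    · have hnr : ¬ rv Γ z ε i 0 := fun hr => not_rv_and_bv hε hA ⟨hr, hb⟩
      simp only [iv, ibv, if_neg hnr, if_pos hb]; decide

lemma add_self_zmod2 : ∀ a : ZMod 2, a + a = 0 := by decide

lemma telescope (f : ℤ → ZMod 2) (a b : ℤ) (hb : a - 1 ≤ b) :
    ∑ i ∈ Finset.Icc a b, (f i + f (i+1)) = f a + f (b+1) := by
  rw [Finset.sum_add_distrib]
  have hre : ∑ i ∈ Finset.Icc a b, f (i+1) = ∑ i ∈ Finset.Icc (a+1) (b+1), f i := by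
    refine Finset.sum_nbij' (i := fun i => i + 1) (j := fun i => i - 1) ?_ ?_ ?_ ?_ ?_
    · intro x hx; simp only [Finset.mem_Icc] at *; omega
    · intro x hx; simp only [Finset.mem_Icc] at *; omega
    · intro x _; ring
    · intro x _; ring
    · intro x _; rfl
  rw [hre]
  rcases lt_or_ge b a with hlt | hle
  · have hb' : b = a - 1 := by omega
    subst hb'
    rw [Finset.Icc_eq_empty (by omega), Finset.Icc_eq_empty (by omega), Finset.sum_empty,
      show a - 1 + 1 = a by ring]
    rw [zero_add]
    exact (add_self_zmod2 (f a)).symm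
  · have h1 : Finset.Icc a b = insert a (Finset.Icc (a+1) b) := by
      ext x; simp only [Finset.mem_Icc, Finset.mem_insert]; omega
    have h2 : Finset.Icc (a+1) (b+1) = insert (b+1) (Finset.Icc (a+1) b) := by
      ext x; simp only [Finset.mem_Icc, Finset.mem_insert]; omega
    rw [h1, h2, Finset.sum_insert (by simp only [Finset.mem_Icc]; omega),
      Finset.sum_insert (by simp only [Finset.mem_Icc]; omega)]
    have key : ∀ x y T : ZMod 2, (x + T) + (y + T) = x + y := by decide
    exact key _ _ _

omit hε hA in
lemma ibv_eq_iv_mirror (a : ℤ) : ibv Γ z ε a 0 = iv Γ z ε (-a-1) 0 := by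
  have h := rv_iff_bv_neg (Γ := Γ) (z := z) (ε := ε) (-a-1)
  rw [show -(-a-1)-1 = a by ring] at h
  by_cases hb : bv Γ z ε a 0
  · rw [ibv, if_pos hb, iv, if_pos (h.mpr hb)]
  · rw [ibv, if_neg hb, iv, if_neg (fun hr => hb (h.mp hr))]

include hε hA in
lemma discrete_contradiction (N : ℕ)
    (hq00 : qq Γ z ε 0 0)
    (hbd : ∀ i j : ℤ, qq Γ z ε i j → |i| ≤ (N:ℤ) ∧ |j| ≤ (N:ℤ)) : False := by
  set M : ℤ := (N:ℤ) + 1 with hM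
  have habs : ∀ i j : ℤ, qq Γ z ε i j → -(N:ℤ) ≤ i ∧ i ≤ N ∧ -(N:ℤ) ≤ j ∧ j ≤ N := by
    intro i j hq
    obtain ⟨h1, h2⟩ := hbd i j hq
    obtain ⟨h3, h4⟩ := abs_le.mp h1
    obtain ⟨h5, h6⟩ := abs_le.mp h2
    exact ⟨h3, h4, h5, h6⟩
  have hnq : ∀ i j : ℤ, (i < -(N:ℤ) ∨ (N:ℤ) < i ∨ j < -(N:ℤ) ∨ (N:ℤ) < j) → ¬ qq Γ z ε i j := by
    intro i j h hq
    have := habs i j hq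
    omega
  have hqb0 : ∀ i j : ℤ, (i < -(N:ℤ) ∨ (N:ℤ) < i ∨ j < -(N:ℤ) ∨ (N:ℤ) < j) →
      qb Γ z ε i j = 0 := by
    intro i j h; simp [qb, hnq i j h]
  have hiv0 : ∀ i j : ℤ, (i < -M ∨ (N:ℤ) < i ∨ j < -(N:ℤ) ∨ (N:ℤ) < j) → iv Γ z ε i j = 0 := by
    intro i j h
    have h1 : ¬ qq Γ z ε i j := hnq i j (by omega)
    have h2 : ¬ qq Γ z ε (i+1) j := hnq (i+1) j (by omega)
    have hr : ¬ rv Γ z ε i j := by rintro (⟨hh, _, _⟩ | ⟨hh, _, _⟩); exacts [h1 hh, h2 hh]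
    simp [iv, hr]
  have hih0 : ∀ i j : ℤ, (i < -(N:ℤ) ∨ (N:ℤ) < i) → ih Γ z ε i j = 0 := by
    intro i j h
    have h1 : ¬ qq Γ z ε i j := hnq i j (by omega)
    have h2 : ¬ qq Γ z ε i (j+1) := hnq i (j+1) (by omega)
    have hr : ¬ rh Γ z ε i j := by rintro (⟨hh, _, _⟩ | ⟨hh, _, _⟩); exacts [h1 hh, h2 hh]
    simp [ih, hr]
  set S : ℤ → ZMod 2 := fun j => ∑ i ∈ Finset.Icc (-M) M, iv Γ z ε i j with hS
  have hstep : ∀ j : ℤ, S (j+1) = S j := by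
    intro j
    have h1 : S j + S (j+1) = ∑ i ∈ Finset.Icc (-M) M, (ih Γ z ε i j + ih Γ z ε (i+1) j) := by
      rw [hS, ← Finset.sum_add_distrib]
      refine Finset.sum_congr rfl fun i _ => ?_
      have hv := vertex_even hε hA i j
      have key : ∀ a b c d : ZMod 2, a + b + c + d = 0 → a + b = c + d := by decide
      exact key _ _ _ _ hv
    have h2 : ∑ i ∈ Finset.Icc (-M) M, (ih Γ z ε i j + ih Γ z ε (i+1) j)
        = ih Γ z ε (-M) j + ih Γ z ε (M+1) j := telescope (fun i => ih Γ z ε i j) (-M) M (by omega)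
    have h3 : ih Γ z ε (-M) j = 0 := hih0 _ _ (by omega)
    have h4 : ih Γ z ε (M+1) j = 0 := hih0 _ _ (by omega)
    have h5 : S j + S (j+1) = 0 := by rw [h1, h2, h3, h4, add_zero]
    have key : ∀ a b : ZMod 2, a + b = 0 → b = a := by decide
    exact key _ _ h5
  have hSM : S (M+1) = 0 := by
    refine Finset.sum_eq_zero fun i _ => hiv0 i (M+1) (by omega)
  have hS0 : S 0 = 0 := by
    have hup : ∀ k : ℕ, S (k : ℤ) = S 0 := by
      intro k
      induction k with
      | zero => norm_num
      | succ n ihn =>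
          rw [show ((n+1 : ℕ) : ℤ) = (n : ℤ) + 1 by push_cast; ring, hstep (n : ℤ), ihn]
    have h6 := hup (N + 2)
    rw [show ((N + 2 : ℕ) : ℤ) = M + 1 by rw [hM]; push_cast; ring, hSM] at h6
    exact h6.symm
  have htel : ∑ i ∈ Finset.Icc (0:ℤ) M, (qb Γ z ε i 0 + qb Γ z ε (i+1) 0)
      = qb Γ z ε 0 0 + qb Γ z ε (M+1) 0 := telescope (fun i => qb Γ z ε i 0) 0 M (by omega)
  have hq1 : qb Γ z ε 0 0 = 1 := by simp [qb, hq00]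
  have hq2 : qb Γ z ε (M+1) 0 = 0 := hqb0 _ _ (by omega)
  have hsplit : ∑ i ∈ Finset.Icc (0:ℤ) M, (qb Γ z ε i 0 + qb Γ z ε (i+1) 0)
      = (∑ i ∈ Finset.Icc (0:ℤ) M, iv Γ z ε i 0) + ∑ i ∈ Finset.Icc (0:ℤ) M, ibv Γ z ε i 0 := by
    rw [← Finset.sum_add_distrib]
    exact Finset.sum_congr rfl fun i _ => (iv_add_ibv hε hA i).symm
  have hmirror : ∑ i ∈ Finset.Icc (0:ℤ) M, ibv Γ z ε i 0
      = ∑ i ∈ Finset.Icc (-M-1) (-1), iv Γ z ε i 0 := by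
    refine Finset.sum_nbij' (fun a => -a-1) (fun a => -a-1) ?_ ?_ ?_ ?_ ?_
    · intro a ha; simp only [Finset.mem_Icc] at *; omega
    · intro a ha; simp only [Finset.mem_Icc] at *; omega
    · intro a _; ring
    · intro a _; ring
    · intro a _; exact ibv_eq_iv_mirror a
  have hunion : (∑ i ∈ Finset.Icc (-M-1) (-1), iv Γ z ε i 0)
      + ∑ i ∈ Finset.Icc (0:ℤ) M, iv Γ z ε i 0
      = ∑ i ∈ Finset.Icc (-M-1) M, iv Γ z ε i 0 := by
    rw [← Finset.sum_union ?hd]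
    · congr 1
      ext x; simp only [Finset.mem_Icc, Finset.mem_union]; omega
    · rw [Finset.disjoint_left]
      intro a ha hb; simp only [Finset.mem_Icc] at *; omega
  have hpeel : ∑ i ∈ Finset.Icc (-M-1) M, iv Γ z ε i 0
      = iv Γ z ε (-M-1) 0 + ∑ i ∈ Finset.Icc (-M) M, iv Γ z ε i 0 := by
    rw [show Finset.Icc (-M-1) M = insert (-M-1) (Finset.Icc (-M) M) by
      ext x; simp only [Finset.mem_Icc, Finset.mem_insert]; omega]
    rw [Finset.sum_insert (by simp only [Finset.mem_Icc]; omega)]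
  have hlast : iv Γ z ε (-M-1) 0 = 0 := hiv0 _ _ (by omega)
  have : (1 : ZMod 2) = 0 := by
    calc (1 : ZMod 2) = qb Γ z ε 0 0 + qb Γ z ε (M+1) 0 := by rw [hq1, hq2, add_zero]
      _ = ∑ i ∈ Finset.Icc (0:ℤ) M, (qb Γ z ε i 0 + qb Γ z ε (i+1) 0) := htel.symm
      _ = (∑ i ∈ Finset.Icc (0:ℤ) M, iv Γ z ε i 0) + ∑ i ∈ Finset.Icc (0:ℤ) M, ibv Γ z ε i 0 := hsplit
      _ = (∑ i ∈ Finset.Icc (-M-1) (-1), iv Γ z ε i 0) + ∑ i ∈ Finset.Icc (0:ℤ) M, iv Γ z ε i 0 := by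
          rw [hmirror]; exact add_comm _ _
      _ = ∑ i ∈ Finset.Icc (-M-1) M, iv Γ z ε i 0 := hunion
      _ = iv Γ z ε (-M-1) 0 + S 0 := hpeel
      _ = 0 := by rw [hlast, hS0, add_zero]
  exact one_ne_zero this

omit hA in
include hε in
lemma gamma_subset_gP : Γ ⊆ gP Γ z ε := by
  intro w hw
  have hre : |w.re - (z.re + ε * ((round ((w.re - z.re)/ε) : ℤ) : ℝ))| ≤ ε/2 := by
    have h1 : w.re - (z.re + ε * ((round ((w.re - z.re)/ε) : ℤ) : ℝ))
        = ε * ((w.re - z.re)/ε - ((round ((w.re - z.re)/ε) : ℤ) : ℝ)) := by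
      field_simp; ring
    rw [h1, abs_mul, abs_of_pos hε]
    have := abs_sub_round ((w.re - z.re)/ε)
    nlinarith
  have him : |w.im - (z.im + ε * ((round ((w.im - z.im)/ε) : ℤ) : ℝ))| ≤ ε/2 := by
    have h1 : w.im - (z.im + ε * ((round ((w.im - z.im)/ε) : ℤ) : ℝ))
        = ε * ((w.im - z.im)/ε - ((round ((w.im - z.im)/ε) : ℤ) : ℝ)) := by
      field_simp; ring
    rw [h1, abs_mul, abs_of_pos hε]
    have := abs_sub_round ((w.im - z.im)/ε)
    nlinarith
  exact ⟨round ((w.re - z.re)/ε), round ((w.im - z.im)/ε),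
    ⟨w, hw, hre, him⟩, hre, him⟩

omit hA in
include hε in
lemma frontier_gP_approx {x : ℂ} (hx : x ∈ frontier (gP Γ z ε)) :
    Metric.infDist x Γ ≤ 4*ε ∧ x ∈ closure Γᶜ := by
  rw [frontier_eq_closure_inter_closure] at hx
  constructor
  · obtain ⟨w, hw, hwd⟩ := Metric.mem_closure_iff.mp hx.1 ε hε
    obtain ⟨i, j, ⟨g, hgΓ, hgc⟩, hwc⟩ := hw
    have hre : |w.re - g.re| ≤ ε := by
      have h1 := hwc.1; have h2 := hgc.1
      have : w.re - g.re = (w.re - (z.re + ε*i)) - (g.re - (z.re + ε*i)) := by ring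
      rw [this]
      calc |(w.re - (z.re + ε*i)) - (g.re - (z.re + ε*i))|
          ≤ |w.re - (z.re + ε*i)| + |g.re - (z.re + ε*i)| := abs_sub _ _
        _ ≤ ε := by linarith
    have him : |w.im - g.im| ≤ ε := by
      have h1 := hwc.2; have h2 := hgc.2
      have : w.im - g.im = (w.im - (z.im + ε*j)) - (g.im - (z.im + ε*j)) := by ring
      rw [this]
      calc |(w.im - (z.im + ε*j)) - (g.im - (z.im + ε*j))|
          ≤ |w.im - (z.im + ε*j)| + |g.im - (z.im + ε*j)| := abs_sub _ _
        _ ≤ ε := by linarith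
    have hwg : dist w g ≤ 2*ε := by
      rw [Complex.dist_eq]
      have := Complex.norm_le_abs_re_add_abs_im (w - g)
      simp only [Complex.sub_re, Complex.sub_im] at this
      linarith
    have : dist x g ≤ 3*ε + ε := by
      have := dist_triangle x w g
      have hd : dist x w ≤ ε := le_of_lt hwd
      linarith
    calc Metric.infDist x Γ ≤ dist x g := Metric.infDist_le_dist_of_mem hgΓ
      _ ≤ 4*ε := by linarith
  · refine closure_mono ?_ hx.2
    exact Set.compl_subset_compl.mpr (gamma_subset_gP hε)

omit hA in
include hε in
lemma exists_frontier_pair (hzΓ : z ∈ Γ) (R : ℝ) (hR : Γ ⊆ Metric.closedBall z R) :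
    ∃ x : ℂ, x ∈ frontier (gP Γ z ε) ∧ 2*z - x ∈ frontier (gP Γ z ε) := by
  by_contra hcon
  push_neg at hcon
  have hz0 : z ∈ gcell z ε 0 0 := by
    constructor <;> · simp; positivity
  have hq00 : qq Γ z ε 0 0 := by
    refine ⟨⟨z, hzΓ, hz0⟩, ?_⟩
    rw [neg_zero]; exact (⟨z, hzΓ, hz0⟩ : (Γ ∩ gcell z ε 0 0).Nonempty)
  obtain ⟨N, hN⟩ := exists_nat_ge (R / ε + 1)
  have hbd : ∀ i j : ℤ, qq Γ z ε i j → |i| ≤ (N:ℤ) ∧ |j| ≤ (N:ℤ) := by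
    intro i j hq
    obtain ⟨⟨w, hwΓ, hwc⟩, _⟩ := hq
    have hwz : dist w z ≤ R := by
      have := hR hwΓ
      simpa [Metric.mem_closedBall] using this
    have hre : |w.re - z.re| ≤ R := by
      rw [Complex.dist_eq] at hwz
      have h1 := Complex.abs_re_le_norm (w - z)
      simp only [Complex.sub_re] at h1
      linarith
    have him : |w.im - z.im| ≤ R := by
      rw [Complex.dist_eq] at hwz
      have h1 := Complex.abs_im_le_norm (w - z)
      simp only [Complex.sub_im] at h1
      linarith
    constructor
    · have h2 : |(i:ℝ)| * ε ≤ R + ε/2 := by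
        have h3 : (i:ℝ) * ε = (w.re - z.re) - (w.re - (z.re + ε * i)) := by ring
        calc |(i:ℝ)| * ε = |(i:ℝ) * ε| := by rw [abs_mul, abs_of_pos hε]
          _ ≤ |w.re - z.re| + |w.re - (z.re + ε * i)| := by
              rw [h3]; exact abs_sub _ _
          _ ≤ R + ε/2 := by have := hwc.1; linarith
      have h5 : |(i:ℝ)| ≤ (R + ε/2)/ε := (le_div_iff₀ hε).mpr h2
      have h7 : (R + ε/2)/ε ≤ (N:ℝ) := by
        rw [div_le_iff₀ hε]
        have hRε : (R/ε)*ε = R := div_mul_cancel₀ R (ne_of_gt hε)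
        nlinarith [hN]
      have h4 : (|i| : ℝ) ≤ (N : ℝ) := by push_cast; linarith
      exact_mod_cast h4
    · have h2 : |(j:ℝ)| * ε ≤ R + ε/2 := by
        have h3 : (j:ℝ) * ε = (w.im - z.im) - (w.im - (z.im + ε * j)) := by ring
        calc |(j:ℝ)| * ε = |(j:ℝ) * ε| := by rw [abs_mul, abs_of_pos hε]
          _ ≤ |w.im - z.im| + |w.im - (z.im + ε * j)| := by
              rw [h3]; exact abs_sub _ _
          _ ≤ R + ε/2 := by have := hwc.2; linarith
      have h5 : |(j:ℝ)| ≤ (R + ε/2)/ε := (le_div_iff₀ hε).mpr h2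
      have h7 : (R + ε/2)/ε ≤ (N:ℝ) := by
        rw [div_le_iff₀ hε]
        have hRε : (R/ε)*ε = R := div_mul_cancel₀ R (ne_of_gt hε)
        nlinarith [hN]
      have h4 : (|j| : ℝ) ≤ (N : ℝ) := by push_cast; linarith
      exact_mod_cast h4
  exact discrete_contradiction hε hcon N hq00 hbd

end IPmid
end

theorem interior_point_two_mul_eq_add_of_distinct_frontier
    (Γ : Set ℂ) (hne : Γ.Nonempty) (hcomp : IsCompact Γ)
    (z : ℂ) (hz : z ∈ interior Γ) :
    ∃ z₁ ∈ frontier Γ, ∃ z₂ ∈ frontier Γ, z₁ ≠ z₂ ∧ z₁ + z₂ = 2 * z := by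
  have hzΓ : z ∈ Γ := interior_subset hz
  obtain ⟨R, hR⟩ := hcomp.isBounded.subset_closedBall z
  have hseq : ∀ n : ℕ, ∃ x : ℂ, Metric.infDist x Γ ≤ 4*((n:ℝ)+1)⁻¹ ∧ x ∈ closure Γᶜ ∧
      Metric.infDist (2*z - x) Γ ≤ 4*((n:ℝ)+1)⁻¹ ∧ (2*z - x) ∈ closure Γᶜ := by
    intro n
    have hε : (0:ℝ) < ((n:ℝ)+1)⁻¹ := by positivity
    obtain ⟨x, hx1, hx2⟩ := IPmid.exists_frontier_pair (Γ := Γ) (z := z) hε hzΓ R hR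
    obtain ⟨h1, h2⟩ := IPmid.frontier_gP_approx hε hx1
    obtain ⟨h3, h4⟩ := IPmid.frontier_gP_approx hε hx2
    exact ⟨x, h1, h2, h3, h4⟩
  choose u hu1 hu2 hu3 hu4 using hseq
  have hub : ∀ n, u n ∈ Metric.closedBall z (R + 4) := by
    intro n
    obtain ⟨g, hg, hdg⟩ := hcomp.exists_infDist_eq_dist hne (u n)
    have hinv1 : ((n:ℝ)+1)⁻¹ ≤ 1 := by
      rw [inv_le_one_iff₀]
      right; simp [Nat.cast_nonneg]
    have h5 : dist (u n) g ≤ 4 := by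
      rw [← hdg]
      refine le_trans (hu1 n) ?_
      linarith
    have h6 : dist g z ≤ R := by simpa [Metric.mem_closedBall] using hR hg
    simp only [Metric.mem_closedBall]
    calc dist (u n) z ≤ dist (u n) g + dist g z := dist_triangle _ _ _
      _ ≤ R + 4 := by linarith
  obtain ⟨a, _, φ, hφ, hconv⟩ := (isCompact_closedBall z (R+4)).tendsto_subseq hub
  have hφtop : Filter.Tendsto φ Filter.atTop Filter.atTop := hφ.tendsto_atTop
  have hzero : Filter.Tendsto (fun k => 4*((φ k : ℝ)+1)⁻¹) Filter.atTop (nhds 0) := by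
    have h0 : Filter.Tendsto (fun n : ℕ => 4*((n : ℝ)+1)⁻¹) Filter.atTop (nhds 0) := by
      have h1 := tendsto_one_div_add_atTop_nhds_zero_nat (𝕜 := ℝ)
      have h2 := h1.const_mul (4:ℝ)
      simpa [one_div, mul_zero] using h2
    exact h0.comp hφtop
  have hmem : ∀ (v : ℕ → ℂ) (x : ℂ), Filter.Tendsto v Filter.atTop (nhds x) →
      (∀ k, Metric.infDist (v k) Γ ≤ 4*((φ k : ℝ)+1)⁻¹) →
      (∀ k, v k ∈ closure Γᶜ) → x ∈ frontier Γ := by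
    intro v x hx hd hc
    have h7 : Filter.Tendsto (fun k => Metric.infDist (v k) Γ) Filter.atTop
        (nhds (Metric.infDist x Γ)) :=
      ((Metric.continuous_infDist_pt Γ).tendsto x).comp hx
    have h8 : Metric.infDist x Γ ≤ 0 := le_of_tendsto_of_tendsto' h7 hzero hd
    have h9 : Metric.infDist x Γ = 0 := le_antisymm h8 Metric.infDist_nonneg
    have hxΓ : x ∈ Γ := (hcomp.isClosed.mem_iff_infDist_zero hne).mpr h9
    have hxc : x ∈ closure Γᶜ :=
      isClosed_closure.mem_of_tendsto hx (Filter.Eventually.of_forall hc)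
    rw [frontier_eq_closure_inter_closure, hcomp.isClosed.closure_eq]
    exact ⟨hxΓ, hxc⟩
  have ha : a ∈ frontier Γ := hmem _ a hconv (fun k => hu1 (φ k)) (fun k => hu2 (φ k))
  have hconv2 : Filter.Tendsto (fun k => 2*z - u (φ k)) Filter.atTop (nhds (2*z - a)) :=
    tendsto_const_nhds.sub hconv
  have ha2 : 2*z - a ∈ frontier Γ := hmem _ (2*z - a) hconv2 (fun k => hu3 (φ k))
    (fun k => hu4 (φ k))
  refine ⟨a, ha, 2*z - a, ha2, ?_, by ring⟩
  intro heq
  have haz : a = z := by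
    have h2 : (2:ℂ) * a = 2 * z := by linear_combination heq
    exact mul_left_cancel₀ two_ne_zero h2
  rw [haz] at ha
  rw [hcomp.isClosed.frontier_eq] at ha
  exact ha.2 hz
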